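/- For each natural number l ≥ 0 define S_l = ∑_{i=0}^{∞} 2^{−i} · ∏_{j=i+1}^{i+l} (1 − 2^{−j}) (so S_0 = ∑_{i=0}^{∞} 2^{−i} = 2, the product being empty when l = 0). Then for every l ≥ 1, S_l = S_{l−1} − 2^l / ((2^l − 1)(2^{l+1} − 1)); in particular all these series converge. -/

import Mathlib

/-- `S_l = ∑_{i=0}^{∞} 2^{−i} · ∏_{j=i+1}^{i+l} (1 − 2^{−j})` (the product is empty,
hence `1`, when `l = 0`, so `S_0 = ∑_{i=0}^{∞} 2^{−i} = 2`). -/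
noncomputable def S (l : ℕ) : ℝ :=
  ∑' i : ℕ, (2 : ℝ) ^ (-(i : ℤ)) *
    ∏ j ∈ Finset.Icc (i + 1) (i + l), (1 - (2 : ℝ) ^ (-(j : ℤ)))

open Finset


noncomputable def rr : ℝ := (2 : ℝ)⁻¹

noncomputable def cc (j : ℕ) : ℝ := 1 - rr ^ j

noncomputable def PP (m i : ℕ) : ℝ := ∏ j ∈ Finset.Icc (i + 1) (i + m), cc j

noncomputable def ff (k m i : ℕ) : ℝ := (rr ^ k) ^ i * PP m i

lemma rr_nonneg : (0:ℝ) ≤ rr := by norm_num [rr]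
lemma rr_lt_one : rr < 1 := by norm_num [rr]

lemma cc_pos {j : ℕ} (hj : 1 ≤ j) : 0 < cc j := by
  have : rr ^ j < 1 := pow_lt_one₀ rr_nonneg rr_lt_one (by omega)
  simp [cc]; linarith

lemma cc_le_one (j : ℕ) : cc j ≤ 1 := by
  have : 0 ≤ rr ^ j := pow_nonneg rr_nonneg _
  simp [cc]; linarith

lemma PP_nonneg (m i : ℕ) : 0 ≤ PP m i :=
  Finset.prod_nonneg fun j hj => (cc_pos (by simp at hj; omega)).le

lemma PP_le_one (m i : ℕ) : PP m i ≤ 1 :=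
  Finset.prod_le_one (fun j hj => (cc_pos (by simp at hj; omega)).le)
    (fun j _ => cc_le_one j)

lemma ff_summable (k m : ℕ) (hk : 1 ≤ k) : Summable (ff k m) := by
  have hb : Summable (fun i : ℕ => rr ^ i) :=
    summable_geometric_of_lt_one rr_nonneg rr_lt_one
  refine Summable.of_nonneg_of_le (fun i => ?_) (fun i => ?_) hb
  · exact mul_nonneg (pow_nonneg (pow_nonneg rr_nonneg _) _) (PP_nonneg m i)
  · calc (rr ^ k) ^ i * PP m i
        ≤ (rr ^ k) ^ i * 1 :=
          mul_le_mul_of_nonneg_left (PP_le_one m i)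
            (pow_nonneg (pow_nonneg rr_nonneg _) _)
    _ = (rr ^ k) ^ i := by ring
    _ ≤ rr ^ i := by
        apply pow_le_pow_left₀ (pow_nonneg rr_nonneg _)
        calc rr ^ k ≤ rr ^ 1 := pow_le_pow_of_le_one rr_nonneg rr_lt_one.le hk
        _ = rr := pow_one rr

lemma prod_Icc_bot (a b : ℕ) (h : a ≤ b) (f : ℕ → ℝ) :
    ∏ r ∈ Finset.Icc a b, f r = f a * ∏ r ∈ Finset.Icc (a+1) b, f r := by
  rw [Finset.Icc_eq_cons_Ioc h, Finset.prod_cons]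
  congr 1
  exact Finset.prod_congr (Finset.Icc_add_one_left_eq_Ioc a b).symm fun _ _ => rfl

lemma key : ∀ m k : ℕ, ∑' i, ff (k + 1) m i =
    (∏ r ∈ Finset.Icc 1 k, cc r) / ∏ r ∈ Finset.Icc (m + 1) (m + k + 1), cc r := by
  intro m
  induction m with
  | zero =>
    intro k
    have hP : ∀ i, PP 0 i = 1 := by
      intro i; simp [PP]
    have h1 : ∑' i, ff (k+1) 0 i = (1 - rr ^ (k+1))⁻¹ := by
      simp only [ff, hP, mul_one]
      exact tsum_geometric_of_lt_one (pow_nonneg rr_nonneg _)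
        (pow_lt_one₀ rr_nonneg rr_lt_one (by omega))
    have hne : (∏ r ∈ Finset.Icc 1 k, cc r) ≠ 0 :=
      ne_of_gt (Finset.prod_pos fun j hj => cc_pos (by simp at hj; omega))
    rw [h1, show (0:ℕ) + k + 1 = k + 1 from by ring,
      Finset.prod_Icc_succ_top (by omega) cc, show (0:ℕ) + 1 = 1 from rfl,
      div_mul_cancel_left₀ hne]
    simp [cc]
  | succ m ih =>
    intro k
    have hterm : ∀ i, ff (k+1) (m+1) i = ff (k+1) m i - rr ^ (m+1) * ff (k+2) m i := by
      intro i
      have hsplit : PP (m+1) i = PP m i * cc (i + m + 1) := by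
        rw [PP, show i + (m+1) = (i + m) + 1 from by ring,
          Finset.prod_Icc_succ_top (by omega) cc]
        rfl
      simp only [ff, hsplit, cc]
      ring
    have hs1 : Summable (ff (k+1) m) := ff_summable _ _ (by omega)
    have hs2 : Summable (ff (k+2) m) := ff_summable _ _ (by omega)
    calc ∑' i, ff (k+1) (m+1) i
        = ∑' i, (ff (k+1) m i - rr ^ (m+1) * ff (k+2) m i) := tsum_congr hterm
      _ = (∑' i, ff (k+1) m i) - rr ^ (m+1) * ∑' i, ff (k+2) m i := by
          rw [Summable.tsum_sub hs1 (hs2.mul_left _), tsum_mul_left]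
      _ = (∏ r ∈ Finset.Icc 1 k, cc r) / ∏ r ∈ Finset.Icc (m+1+1) (m+1+k+1), cc r := by
          rw [ih k, ih (k+1),
            show m+(k+1)+1 = m+k+2 from by ring, show m+1+1 = m+2 from by ring,
            show m+1+k+1 = m+k+2 from by ring]
          rw [prod_Icc_bot (m+1) (m+k+2) (by omega) cc,
            prod_Icc_bot (m+1) (m+k+1) (by omega) cc,
            show ∏ r ∈ Finset.Icc (m+1+1) (m+k+2), cc r
              = (∏ r ∈ Finset.Icc (m+1+1) (m+k+1), cc r) * cc (m+k+2) from by
              rw [show m+k+2 = (m+k+1)+1 from by ring,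
                Finset.prod_Icc_succ_top (by omega) cc],
            Finset.prod_Icc_succ_top (show 1 ≤ k+1 by omega) cc]
          set A := ∏ r ∈ Finset.Icc 1 k, cc r with hA
          set E := ∏ r ∈ Finset.Icc (m+1+1) (m+k+1), cc r with hE
          have hApos : 0 < A := Finset.prod_pos fun j hj => cc_pos (by simp at hj; omega)
          have hEpos : 0 < E := Finset.prod_pos fun j hj => cc_pos (by simp at hj; omega)
          have h1 : cc (m+1) ≠ 0 := ne_of_gt (cc_pos (by omega))
          have h2 : cc (m+k+2) ≠ 0 := ne_of_gt (cc_pos (by omega))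
          field_simp [h1, h2, ne_of_gt hEpos]
          simp only [cc]
          ring

lemma hz (j : ℕ) : (2:ℝ) ^ (-(j:ℤ)) = rr ^ j := by
  rw [zpow_neg, zpow_natCast, ← inv_pow]; rfl

lemma term_eq (m : ℕ) : (fun i : ℕ => (2 : ℝ) ^ (-(i : ℤ)) *
    ∏ j ∈ Finset.Icc (i + 1) (i + m), (1 - (2 : ℝ) ^ (-(j : ℤ)))) = ff 1 m := by
  funext i
  simp [ff, PP, cc, hz, pow_one, rr, inv_pow]


lemma S_eq (n : ℕ) : S n = (cc (n+1))⁻¹ := by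
  have : S n = ∑' i, ff 1 n i := by
    rw [S, term_eq]
  rw [this, key n 0]
  simp

lemma pow_sub_ne (j : ℕ) (hj : 1 ≤ j) : (2:ℝ) ^ j - 1 ≠ 0 := by
  have : (2:ℝ)^1 ≤ (2:ℝ)^j := pow_le_pow_right₀ (by norm_num) hj
  norm_num at this ⊢
  linarith

lemma cc_eq (j : ℕ) : cc j = ((2:ℝ)^j - 1) / (2:ℝ)^j := by
  have h2 : ((2:ℝ)^j) ≠ 0 := by positivity
  simp only [cc, rr, inv_pow, sub_div, div_self h2, one_div]

/-- For every `l ≥ 1`, `S_l = S_{l−1} − 2^l / ((2^l − 1)(2^{l+1} − 1))`; in particular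
all the series defining the `S_m` converge. -/
theorem S_recurrence (l : ℕ) (hl : 1 ≤ l) :
    (∀ m : ℕ, Summable (fun i : ℕ => (2 : ℝ) ^ (-(i : ℤ)) *
        ∏ j ∈ Finset.Icc (i + 1) (i + m), (1 - (2 : ℝ) ^ (-(j : ℤ))))) ∧
      S l = S (l - 1) - (2 : ℝ) ^ l / (((2 : ℝ) ^ l - 1) * ((2 : ℝ) ^ (l + 1) - 1)) := by
  constructor
  · intro m
    rw [term_eq]
    exact ff_summable 1 m le_rfl
  · obtain ⟨m, rfl⟩ : ∃ m, l = m + 1 := ⟨l - 1, by omega⟩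
    rw [S_eq, show m + 1 - 1 = m from rfl, S_eq, cc_eq, cc_eq]
    have h1 : (2:ℝ) ^ (m+2) - 1 ≠ 0 := pow_sub_ne _ (by omega)
    have h2 : (2:ℝ) ^ (m+1) - 1 ≠ 0 := pow_sub_ne _ (by omega)
    have h3 : ((2:ℝ) ^ (m+2)) ≠ 0 := by positivity
    have h4 : ((2:ℝ) ^ (m+1)) ≠ 0 := by positivity
    rw [show m + 1 + 1 = m + 2 from rfl]
    field_simp
    ring
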